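/- For generic rational u, setting a = (u²−1)/(u²+2u−1) and x₀ = (u²−1)/(u²+1), the point (x₀, −x₀) is a periodic point of the Lyness map F_a(x,y) = (y, (a+y)/x) of period 8: F_a^8(x₀, −x₀) = (x₀, −x₀), provided all iterates are defined. -/

import Mathlib

/-- The Lyness map `F_a(x,y) = (y, (a+y)/x)`. -/
def lyness (a : ℚ) (p : ℚ × ℚ) : ℚ × ℚ := (p.2, (a + p.2) / p.1)

/-- For generic `u`, with `a = (u²-1)/(u²+2u-1)` and `x₀ = (u²-1)/(u²+1)`,
the point `(x₀, -x₀)` is 8-periodic under `F_a`, provided all iterates are defined. -/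
theorem lyness_period_eight (u : ℚ) (h1 : u^2 + 2*u - 1 ≠ 0)
    (hdef : ∀ k, k < 8 →
      ((lyness ((u^2 - 1)/(u^2 + 2*u - 1)))^[k]
        ((u^2 - 1)/(u^2 + 1), -((u^2 - 1)/(u^2 + 1)))).1 ≠ 0) :
    (lyness ((u^2 - 1)/(u^2 + 2*u - 1)))^[8]
        ((u^2 - 1)/(u^2 + 1), -((u^2 - 1)/(u^2 + 1)))
      = ((u^2 - 1)/(u^2 + 1), -((u^2 - 1)/(u^2 + 1))) := by
  have h2 : (u^2 + 1 : ℚ) ≠ 0 := by positivity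
  have h3 : (u^2 - 1 : ℚ) ≠ 0 := by
    have h0 := hdef 0 (by norm_num)
    simp only [Function.iterate_zero, id] at h0
    intro h
    exact h0 (by rw [h]; simp)
  have h4 : (u + 1 : ℚ) ≠ 0 := fun h => h3 (by
    have : u = -1 := by linarith
    rw [this]; ring)
  have h5 : (u - 1 : ℚ) ≠ 0 := fun h => h3 (by
    have : u = 1 := by linarith
    rw [this]; ring)
  set a : ℚ := (u^2 - 1)/(u^2 + 2*u - 1) with ha
  have s1 : lyness a ((u^2 - 1)/(u^2 + 1), -((u^2 - 1)/(u^2 + 1)))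
      = (-((u^2 - 1)/(u^2 + 1)), 2*(1-u)/(u^2 + 2*u - 1)) := by
    simp only [lyness, ha, Prod.mk.injEq]
    refine ⟨trivial, ?_⟩
    rw [div_eq_iff (div_ne_zero h3 h2)]
    field_simp [show u * (u + 2) - 1 ≠ 0 from fun h => h1 (by linarith)]
    ring
  have s2 : lyness a (-((u^2 - 1)/(u^2 + 1)), 2*(1-u)/(u^2 + 2*u - 1))
      = (2*(1-u)/(u^2 + 2*u - 1), (1-u)*(1+u^2)/((u+1)*(u^2 + 2*u - 1))) := by
    simp only [lyness, ha, Prod.mk.injEq]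
    refine ⟨trivial, ?_⟩
    rw [div_eq_iff (neg_ne_zero.mpr (div_ne_zero h3 h2))]
    field_simp
    ring
  have s3 : lyness a (2*(1-u)/(u^2 + 2*u - 1), (1-u)*(1+u^2)/((u+1)*(u^2 + 2*u - 1)))
      = ((1-u)*(1+u^2)/((u+1)*(u^2 + 2*u - 1)), -u/(u+1)) := by
    have h1u : (1 - u : ℚ) ≠ 0 := fun h => h5 (by linarith)
    simp only [lyness, ha, Prod.mk.injEq]
    refine ⟨trivial, ?_⟩
    rw [div_eq_iff (div_ne_zero (by intro h; exact h5 (by linarith [mul_eq_zero.mp h])) h1)]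
    field_simp
    ring
  have s4 : lyness a ((1-u)*(1+u^2)/((u+1)*(u^2 + 2*u - 1)), -u/(u+1))
      = (-u/(u+1), 1/(u-1)) := by
    have h1u : (1 - u : ℚ) ≠ 0 := fun h => h5 (by linarith)
    have h1u2 : (1 + u^2 : ℚ) ≠ 0 := by positivity
    simp only [lyness, ha, Prod.mk.injEq]
    refine ⟨trivial, ?_⟩
    rw [div_eq_iff (div_ne_zero (mul_ne_zero h1u (by positivity)) (mul_ne_zero h4 h1))]
    field_simp [show u * (u + 2) - 1 ≠ 0 from fun h => h1 (by linarith)]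
    ring
  have hu : u ≠ 0 := by
    have h04 := hdef 4 (by norm_num)
    rw [show (4:ℕ) = 4 from rfl] at h04
    simp only [Function.iterate_succ, Function.iterate_zero, Function.comp_apply, id,
      ← ha] at h04
    rw [s1, s2, s3, s4] at h04
    simp only at h04
    intro h
    exact h04 (by rw [h]; simp)
  have s5 : lyness a (-u/(u+1), 1/(u-1))
      = (1/(u-1), -((1+u)*(1+u^2))/((u-1)*(u^2 + 2*u - 1))) := by
    simp only [lyness, ha, Prod.mk.injEq]
    refine ⟨trivial, ?_⟩
    rw [div_eq_iff (div_ne_zero (neg_ne_zero.mpr hu) h4)]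
    field_simp [show u * (u + 2) - 1 ≠ 0 from fun h => h1 (by linarith)]
    ring
  have s6 : lyness a (1/(u-1), -((1+u)*(1+u^2))/((u-1)*(u^2 + 2*u - 1)))
      = (-((1+u)*(1+u^2))/((u-1)*(u^2 + 2*u - 1)), -(2*u*(u+1))/(u^2 + 2*u - 1)) := by
    simp only [lyness, ha, Prod.mk.injEq]
    refine ⟨trivial, ?_⟩
    rw [div_eq_iff (div_ne_zero one_ne_zero h5)]
    field_simp
    ring
  have s7 : lyness a (-((1+u)*(1+u^2))/((u-1)*(u^2 + 2*u - 1)), -(2*u*(u+1))/(u^2 + 2*u - 1))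
      = (-(2*u*(u+1))/(u^2 + 2*u - 1), (u^2 - 1)/(u^2 + 1)) := by
    have h1u2 : (1 + u^2 : ℚ) ≠ 0 := by positivity
    have h1u : (1 + u : ℚ) ≠ 0 := fun h => h4 (by linarith)
    simp only [lyness, ha, Prod.mk.injEq]
    refine ⟨trivial, ?_⟩
    rw [div_eq_iff (div_ne_zero (neg_ne_zero.mpr (mul_ne_zero h1u h1u2)) (mul_ne_zero h5 h1))]
    field_simp
    ring
  have s8 : lyness a (-(2*u*(u+1))/(u^2 + 2*u - 1), (u^2 - 1)/(u^2 + 1))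
      = ((u^2 - 1)/(u^2 + 1), -((u^2 - 1)/(u^2 + 1))) := by
    have h1u : (1 + u : ℚ) ≠ 0 := fun h => h4 (by linarith)
    simp only [lyness, ha, Prod.mk.injEq]
    refine ⟨trivial, ?_⟩
    rw [div_eq_iff (div_ne_zero (neg_ne_zero.mpr (mul_ne_zero (mul_ne_zero two_ne_zero hu) h4)) h1)]
    field_simp [show u * (u + 2) - 1 ≠ 0 from fun h => h1 (by linarith)]
    ring
  show (lyness a)^[8] _ = _
  simp only [Function.iterate_succ, Function.iterate_zero, Function.comp_apply, id]
  rw [s1, s2, s3, s4, s5, s6, s7, s8]
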